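/- Let M be a metric space with base point 0. Suppose (m_{xᵢyᵢ})_{i∈I} is a (finite or countably infinite) family of molecules, each of which is a Δ-point of B_{F(M)}, and each satisfying the slice-shrinking property: for every ε > 0 and every slice S of B_{F(M)} containing m_{xᵢyᵢ} there exist u ≠ v with m_{uv} ∈ S and d(u,v) < ε. If λᵢ > 0 with Σ_{i∈I} λᵢ = 1 and μ := Σ_{i∈I} λᵢ m_{xᵢyᵢ} has norm 1, then μ is a Δ-point. -/

import Mathlib

/-- An abstract characterization of the Lipschitz-free space `F(M)` over a pointed
metric space `(M, base)`: a normed space `X` together with a map `δ : M → X`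
(the canonical embedding) such that `δ base = 0`, the span of `δ(M)` is dense,
every `1`-Lipschitz function vanishing at the base point extends to a functional of
norm at most one, and every functional of norm at most one induces a `1`-Lipschitz
function on `M`. These properties determine `F(M)` up to isometric isomorphism. -/
structure IsLipschitzFreeSpace (M : Type*) [MetricSpace M] (base : M)
    (X : Type*) [NormedAddCommGroup X] [NormedSpace ℝ X] (δ : M → X) : Prop where
  map_base : δ base = 0
  dense_span : (Submodule.span ℝ (Set.range δ)).topologicalClosure = ⊤
  extend_lipschitz : ∀ g : M → ℝ, LipschitzWith 1 g → g base = 0 →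
    ∃ φ : X →L[ℝ] ℝ, ‖φ‖ ≤ 1 ∧ ∀ p, φ (δ p) = g p
  lipschitz_of_dual : ∀ φ : X →L[ℝ] ℝ, ‖φ‖ ≤ 1 →
    LipschitzWith 1 (fun p => φ (δ p))

/-- The molecule `m_{xy} = (δ_x - δ_y) / d(x,y)`. -/
noncomputable def molecule {M : Type*} [MetricSpace M]
    {X : Type*} [NormedAddCommGroup X] [NormedSpace ℝ X]
    (δ : M → X) (x y : M) : X :=
  (dist x y)⁻¹ • (δ x - δ y)

/-- `μ` is a Daugavet-point: every slice `S(f,α)` of the unit ball contains, for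
every `ε > 0`, an element at distance at least `2 - ε` from `μ`. -/
def IsDaugavetPoint {X : Type*} [NormedAddCommGroup X] [NormedSpace ℝ X]
    (μ : X) : Prop :=
  ∀ f : X →L[ℝ] ℝ, ‖f‖ = 1 → ∀ α : ℝ, 0 < α → ∀ ε : ℝ, 0 < ε →
    ∃ ν : X, ‖ν‖ ≤ 1 ∧ f ν > 1 - α ∧ 2 - ε ≤ ‖μ - ν‖

/-- `μ` is a Δ-point: every slice `S(f,α)` of the unit ball containing `μ`
contains, for every `ε > 0`, an element at distance at least `2 - ε` from `μ`. -/
def IsDeltaPoint {X : Type*} [NormedAddCommGroup X] [NormedSpace ℝ X]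
    (μ : X) : Prop :=
  ∀ f : X →L[ℝ] ℝ, ‖f‖ = 1 → ∀ α : ℝ, 0 < α → f μ > 1 - α →
    ∀ ε : ℝ, 0 < ε → ∃ ν : X, ‖ν‖ ≤ 1 ∧ f ν > 1 - α ∧ 2 - ε ≤ ‖μ - ν‖

/-- `ν` is a denting point of the unit ball: `‖ν‖ ≤ 1` and `ν` belongs to slices of
the unit ball of arbitrarily small diameter. -/
def IsDentingPoint {X : Type*} [NormedAddCommGroup X] [NormedSpace ℝ X]
    (ν : X) : Prop :=
  ‖ν‖ ≤ 1 ∧ ∀ ε : ℝ, 0 < ε → ∃ f : X →L[ℝ] ℝ, ∃ α : ℝ, ‖f‖ = 1 ∧ 0 < α ∧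
    f ν > 1 - α ∧ ∀ w w' : X, ‖w‖ ≤ 1 → f w > 1 - α → ‖w'‖ ≤ 1 → f w' > 1 - α →
      ‖w - w'‖ < ε

lemma norm_molecule_le' {M : Type*} [MetricSpace M] {base : M}
    {X : Type*} [NormedAddCommGroup X] [NormedSpace ℝ X] {δ : M → X}
    (hfree : IsLipschitzFreeSpace M base X δ) (u v : M) :
    ‖molecule δ u v‖ ≤ 1 := by
  rcases eq_or_ne u v with rfl | huv
  · simp [molecule]
  have hd : 0 < dist u v := dist_pos.2 huv
  have hδ : ‖δ u - δ v‖ ≤ dist u v := by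
    rcases eq_or_ne (δ u) (δ v) with h | h
    · simp [h, hd.le]
    · obtain ⟨φ, hφ1, hφ2⟩ := exists_dual_vector ℝ (δ u - δ v) (norm_ne_zero_iff.2 (sub_ne_zero.2 h))
      have hl := hfree.lipschitz_of_dual φ hφ1.le
      have hdist : dist (φ (δ u)) (φ (δ v)) ≤ 1 * dist u v := hl.dist_le_mul u v
      have heq : ‖δ u - δ v‖ = φ (δ u) - φ (δ v) := by
        rw [← map_sub]; exact hφ2.symm
      rw [heq]
      calc φ (δ u) - φ (δ v) ≤ |φ (δ u) - φ (δ v)| := le_abs_self _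
        _ ≤ dist u v := by rw [← Real.dist_eq]; linarith
  have heq : ‖molecule δ u v‖ = (dist u v)⁻¹ * ‖δ u - δ v‖ := by
    rw [molecule, norm_smul, Real.norm_eq_abs, abs_of_nonneg (inv_nonneg.2 hd.le)]
  rw [heq, inv_mul_le_iff₀ hd]
  nlinarith

/-- Corollary 4.4: a norm-one (finite or countably infinite) convex
combination of molecules which are Δ-points with the slice-shrinking property is a
Δ-point. -/
theorem stmt17 {M : Type*} [MetricSpace M] (base : M)
    {X : Type*} [NormedAddCommGroup X] [NormedSpace ℝ X] (δ : M → X)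
    (hfree : IsLipschitzFreeSpace M base X δ)
    {I : Type*} [Countable I] (lam : I → ℝ) (x y : I → M)
    (hxy : ∀ i, x i ≠ y i)
    (hdelta : ∀ i, IsDeltaPoint (molecule δ (x i) (y i)))
    (hshrink : ∀ i, ∀ ε : ℝ, 0 < ε → ∀ f : X →L[ℝ] ℝ, ‖f‖ = 1 →
      ∀ α : ℝ, 0 < α → f (molecule δ (x i) (y i)) > 1 - α →
        ∃ u v : M, u ≠ v ∧ ‖molecule δ u v‖ ≤ 1 ∧
          f (molecule δ u v) > 1 - α ∧ dist u v < ε)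
    (hlam : ∀ i, 0 < lam i) (hlamsum : HasSum lam 1)
    (μ : X) (hμsum : HasSum (fun i => lam i • molecule δ (x i) (y i)) μ)
    (hμ : ‖μ‖ = 1) :
    IsDeltaPoint μ := by
  intro f hf α hα hfμ ε hε
  have hmol : ∀ i, ‖molecule δ (x i) (y i)‖ ≤ 1 := fun i => norm_molecule_le' hfree _ _
  have hdpos : ∀ i, 0 < dist (x i) (y i) := fun i => dist_pos.2 (hxy i)
  -- Step 1: some molecule lies in the slice
  have hfsum : HasSum (fun i => lam i * f (molecule δ (x i) (y i))) (f μ) := by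
    have h := hμsum.mapL f
    simpa [map_smul, smul_eq_mul] using h
  have hex : ∃ i, f (molecule δ (x i) (y i)) > 1 - α := by
    by_contra hcon
    push_neg at hcon
    have h2 : HasSum (fun i => lam i * (1 - α)) ((1:ℝ) * (1 - α)) := hlamsum.mul_right _
    have hle : f μ ≤ (1:ℝ) * (1 - α) :=
      hasSum_le (fun i => mul_le_mul_of_nonneg_left (hcon i) (hlam i).le) hfsum h2
    rw [one_mul] at hle
    linarith
  obtain ⟨i₀, hi₀⟩ := hex
  -- Step 2: finite approximation of μ
  have hFex : ∃ F : Finset I, 1 - ε/4 < ∑ i ∈ F, lam i :=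
    (hlamsum.eventually (eventually_gt_nhds (by linarith : 1 - ε/4 < 1))).exists
  obtain ⟨F, hF⟩ := hFex
  set μF : X := ∑ i ∈ F, lam i • molecule δ (x i) (y i) with hμFdef
  have hsum' : HasSum (fun i => lam i • molecule δ (x i) (y i))
      ((μ - μF) + ∑ i ∈ F, lam i • molecule δ (x i) (y i)) := by
    have heq : (μ - μF) + ∑ i ∈ F, lam i • molecule δ (x i) (y i) = μ := by
      rw [← hμFdef]; abel
    rw [heq]; exact hμsum
  have hcompl := (Finset.hasSum_compl_iff F).2 hsum'
  have hlamsum' : HasSum lam ((1 - ∑ i ∈ F, lam i) + ∑ i ∈ F, lam i) := by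
    have heq : (1 - ∑ i ∈ F, lam i) + ∑ i ∈ F, lam i = 1 := by ring
    rw [heq]; exact hlamsum
  have hlamcompl := (Finset.hasSum_compl_iff F).2 hlamsum'
  have hbnd : ∀ j : I, ‖lam j • molecule δ (x j) (y j)‖ ≤ lam j := by
    intro j
    rw [norm_smul, Real.norm_eq_abs, abs_of_pos (hlam j)]
    calc lam j * ‖molecule δ (x j) (y j)‖ ≤ lam j * 1 :=
        mul_le_mul_of_nonneg_left (hmol j) (hlam j).le
      _ = lam j := mul_one _
  have hnormsum : Summable (fun i : { j // j ∉ F } =>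
      ‖lam (i : I) • molecule δ (x (i : I)) (y (i : I))‖) :=
    Summable.of_nonneg_of_le (fun i => norm_nonneg _)
      (fun i => hbnd (i : I)) hlamcompl.summable
  have htailnorm : ‖μ - μF‖ ≤ ε/4 := by
    rw [← hcompl.tsum_eq]
    refine le_trans (norm_tsum_le_tsum_norm hnormsum) ?_
    refine le_trans (Summable.tsum_le_tsum (fun i => hbnd _) hnormsum hlamcompl.summable) ?_
    rw [hlamcompl.tsum_eq]
    linarith
  -- the constant C and radius r
  set C : ℝ := ∑ i ∈ F, lam i / dist (x i) (y i) with hCdef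
  have hC : 0 ≤ C := Finset.sum_nonneg fun i _ => div_nonneg (hlam i).le dist_nonneg
  set r : ℝ := ε / (16 * (C + 1)) with hrdef
  have hr : 0 < r := div_pos hε (by linarith)
  -- Step 3: get the small molecule in the slice
  obtain ⟨u, v, huv, hmuvnorm, hmuvslice, hduv⟩ := hshrink i₀ r hr f hf α hα hi₀
  refine ⟨molecule δ u v, hmuvnorm, hmuvslice, ?_⟩
  -- Step 4: the distance estimate
  have hdv : 0 < dist u v := dist_pos.2 huv
  set d : ℝ := dist u v with hddef
  -- Hahn-Banach functional for μ
  have hμne : μ ≠ 0 := fun h => by simp [h] at hμ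
  obtain ⟨f₀, hf₀, hf₀μ0⟩ := exists_dual_vector ℝ μ (norm_ne_zero_iff.2 hμne)
  have hf₀μ : f₀ μ = 1 := by rw [hf₀μ0, hμ]; norm_num
  set g₀ : M → ℝ := fun p => f₀ (δ p) with hg₀def
  have hg₀lip : LipschitzWith 1 g₀ := hfree.lipschitz_of_dual f₀ hf₀.le
  have hg₀base : g₀ base = 0 := by
    simp only [hg₀def, hfree.map_base, map_zero]
  set g : M → ℝ := fun p => min (g₀ p) (g₀ u - 2*d + dist p u) with hgdef
  have hglip : LipschitzWith 1 g := by
    have h2 : LipschitzWith 1 (fun p : M => g₀ u - 2*d + dist p u) := by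
      apply LipschitzWith.of_dist_le_mul
      intro a b
      rw [Real.dist_eq, NNReal.coe_one, one_mul]
      have heq : g₀ u - 2*d + dist a u - (g₀ u - 2*d + dist b u)
          = dist a u - dist b u := by ring
      rw [heq]
      exact abs_dist_sub_le a b u
    have h3 := hg₀lip.min h2
    rw [sup_idem] at h3
    exact h3
  have hg1lip : LipschitzWith 1 (fun p => g p - g base) := by
    apply LipschitzWith.of_dist_le_mul
    intro a b
    rw [Real.dist_eq]
    have h1 := hglip.dist_le_mul a b
    rw [Real.dist_eq] at h1
    have heq : g a - g base - (g b - g base) = g a - g b := by ring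
    rw [heq]
    exact h1
  obtain ⟨φ, hφnorm, hφval⟩ := hfree.extend_lipschitz _ hg1lip (by simp)
  -- key values of g
  have hg₀uv : g₀ u - d ≤ g₀ v := by
    have h1 := hg₀lip.dist_le_mul u v
    rw [Real.dist_eq, NNReal.coe_one, one_mul, ← hddef] at h1
    have h2 := abs_le.1 h1
    linarith [h2.1, h2.2]
  have hgu : g u = g₀ u - 2*d := by
    simp only [hgdef, dist_self, add_zero]
    exact min_eq_right (by linarith)
  have hgv : g v = g₀ u - d := by
    simp only [hgdef]
    rw [dist_comm v u, ← hddef]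
    have heq : g₀ u - 2*d + d = g₀ u - d := by ring
    rw [heq]
    exact min_eq_right hg₀uv
  -- φ (molecule u v) = -1
  have hφmol : φ (molecule δ u v) = -1 := by
    rw [molecule, map_smul, map_sub, hφval, hφval, smul_eq_mul, ← hddef, hgu, hgv]
    have heq : g₀ u - 2*d - g base - (g₀ u - d - g base) = -d := by ring
    rw [heq]
    field_simp
  -- pointwise bounds
  have hgle : ∀ p, g p ≤ g₀ p := fun p => min_le_left _ _
  have hgge : ∀ p, g₀ p - 2*d ≤ g p := by
    intro p
    apply le_min (by linarith)
    have h1 := hg₀lip.dist_le_mul p u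
    rw [Real.dist_eq, NNReal.coe_one, one_mul] at h1
    have h2 := abs_le.1 h1
    linarith [h2.1]
  have hgbase : |g base| ≤ 2*d := by
    rw [abs_le]
    have h1 := hgle base
    have h2 := hgge base
    rw [hg₀base] at h1 h2
    constructor <;> linarith
  have herr : ∀ p, |φ (δ p) - f₀ (δ p)| ≤ 4*d := by
    intro p
    rw [hφval]
    have h1 := hgle p
    have h2 := hgge p
    have h3 := abs_le.1 hgbase
    have heq : (f₀ (δ p) : ℝ) = g₀ p := rfl
    rw [heq, abs_le]
    constructor <;> linarith [h3.1, h3.2]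
  -- estimate on μF
  have hterm : ∀ i, |φ (lam i • molecule δ (x i) (y i))
      - f₀ (lam i • molecule δ (x i) (y i))| ≤ lam i / dist (x i) (y i) * (8*d) := by
    intro i
    have hdi := hdpos i
    have heq : φ (lam i • molecule δ (x i) (y i))
        - f₀ (lam i • molecule δ (x i) (y i))
        = lam i / dist (x i) (y i) *
          ((φ (δ (x i)) - f₀ (δ (x i))) - (φ (δ (y i)) - f₀ (δ (y i)))) := by
      rw [molecule, map_smul, map_smul, map_smul, map_smul, map_sub, map_sub]
      simp only [smul_eq_mul]
      field_simp
      ring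
    rw [heq, abs_mul, abs_of_nonneg (div_nonneg (hlam i).le dist_nonneg)]
    apply mul_le_mul_of_nonneg_left ?_ (div_nonneg (hlam i).le dist_nonneg)
    have h1 := herr (x i)
    have h2 := herr (y i)
    calc |(φ (δ (x i)) - f₀ (δ (x i))) - (φ (δ (y i)) - f₀ (δ (y i)))|
        ≤ |φ (δ (x i)) - f₀ (δ (x i))| + |φ (δ (y i)) - f₀ (δ (y i))| := abs_sub _ _
      _ ≤ 4*d + 4*d := add_le_add h1 h2
      _ = 8*d := by ring
  have hφμF : |φ μF - f₀ μF| ≤ 8 * d * C := by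
    rw [hμFdef, map_sum, map_sum, ← Finset.sum_sub_distrib]
    calc |∑ i ∈ F, (φ (lam i • molecule δ (x i) (y i)) -
          f₀ (lam i • molecule δ (x i) (y i)))|
        ≤ ∑ i ∈ F, |φ (lam i • molecule δ (x i) (y i)) -
          f₀ (lam i • molecule δ (x i) (y i))| := Finset.abs_sum_le_sum_abs _ _
      _ ≤ ∑ i ∈ F, lam i / dist (x i) (y i) * (8*d) :=
          Finset.sum_le_sum fun i _ => hterm i
      _ = 8 * d * C := by rw [hCdef, ← Finset.sum_mul]; ring
  -- collect estimates
  have h8dC : 8 * d * C ≤ ε/2 := by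
    have hdr : d ≤ r := le_of_lt hduv
    have h1 : (0:ℝ) < 16 * (C + 1) := by linarith
    have h2 : r * (16 * (C+1)) = ε := by
      rw [hrdef]; field_simp
    nlinarith [mul_le_mul_of_nonneg_right hdr (by linarith : (0:ℝ) ≤ 8*C), hr.le, hC]
  have hf₀μF : 1 - ε/4 ≤ f₀ μF := by
    have h1 : |f₀ (μ - μF)| ≤ ε/4 := by
      calc |f₀ (μ - μF)| ≤ ‖f₀‖ * ‖μ - μF‖ := f₀.le_opNorm _
        _ ≤ 1 * (ε/4) := mul_le_mul hf₀.le htailnorm (norm_nonneg _) zero_le_one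
        _ = ε/4 := one_mul _
    have h2 := (abs_le.1 h1).2
    rw [map_sub] at h2
    rw [hf₀μ] at h2
    linarith
  have hφμ : 1 - ε ≤ φ μ := by
    have h1 : |φ (μ - μF)| ≤ ε/4 := by
      calc |φ (μ - μF)| ≤ ‖φ‖ * ‖μ - μF‖ := φ.le_opNorm _
        _ ≤ 1 * (ε/4) := mul_le_mul hφnorm htailnorm (norm_nonneg _) zero_le_one
        _ = ε/4 := one_mul _
    have h2 := (abs_le.1 h1).1
    rw [map_sub] at h2
    have h3 := (abs_le.1 hφμF).1
    linarith
  -- conclude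
  have hfinal : φ (μ - molecule δ u v) ≤ ‖μ - molecule δ u v‖ := by
    calc φ (μ - molecule δ u v) ≤ |φ (μ - molecule δ u v)| := le_abs_self _
      _ ≤ ‖φ‖ * ‖μ - molecule δ u v‖ := φ.le_opNorm _
      _ ≤ 1 * ‖μ - molecule δ u v‖ :=
          mul_le_mul_of_nonneg_right hφnorm (norm_nonneg _)
      _ = ‖μ - molecule δ u v‖ := one_mul _
  rw [map_sub, hφmol] at hfinal
  linarith
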